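/- The column sums of the array c satisfy ∑_{l=1}^∞ c(l,k) = 4/k^2 + O(ln^2 k / k^3); precisely, there is a constant C > 0 such that |∑_{l=1}^∞ c(l,k) − 4/k^2| ≤ C·ln^2 k / k^3 for all integers k ≥ 2. -/

import Mathlib

open scoped Classical

/-- The constants `c(l,k)`: `c(l,0) = c(0,k) = 0`,
`c(1,k) = (2k²+14k)/((k+1)(k+2)(k+3)(k+4))` for `k ≥ 1`, and for `l > 1`, `k > 0`,
`c(l,k) = c(l,k-1)·(l+k-1)/(2l+k+2) + c(l-1,k)·(l-1)/(2l+k+2)`. -/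
noncomputable def c : ℕ → ℕ → ℝ
  | _, 0 => 0
  | 0, _ => 0
  | 1, k + 1 =>
      (2 * ((k : ℝ) + 1) ^ 2 + 14 * ((k : ℝ) + 1)) /
        (((k : ℝ) + 2) * ((k : ℝ) + 3) * ((k : ℝ) + 4) * ((k : ℝ) + 5))
  | l + 2, k + 1 =>
      c (l + 2) k * ((l : ℝ) + (k : ℝ) + 2) / (2 * (l : ℝ) + (k : ℝ) + 7) +
      c (l + 1) (k + 1) * ((l : ℝ) + 1) / (2 * (l : ℝ) + (k : ℝ) + 7)
termination_by l k => (l, k)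


lemma c_l0 (l : ℕ) : c l 0 = 0 := by
  cases l with
  | zero => simp [c]
  | succ n => cases n <;> simp [c]

lemma c_0k (k : ℕ) : c 0 k = 0 := by cases k <;> simp [c]

lemma c_1 (k : ℕ) : c 1 (k+1) = (2 * ((k : ℝ) + 1) ^ 2 + 14 * ((k : ℝ) + 1)) /
        (((k : ℝ) + 2) * ((k : ℝ) + 3) * ((k : ℝ) + 4) * ((k : ℝ) + 5)) := by
  simp [c]

lemma c_rec (l k : ℕ) : c (l+2) (k+1) =
      c (l + 2) k * ((l : ℝ) + (k : ℝ) + 2) / (2 * (l : ℝ) + (k : ℝ) + 7) +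
      c (l + 1) (k + 1) * ((l : ℝ) + 1) / (2 * (l : ℝ) + (k : ℝ) + 7) := by
  rw [c]

private lemma c_nonneg_aux : ∀ N l k, l + k ≤ N → 0 ≤ c l k := by
  intro N
  induction N with
  | zero => intro l k h; have : l = 0 := by omega
            subst this; rw [c_0k]
  | succ N ih =>
    intro l k h
    match l, k with
    | 0, k => rw [c_0k]
    | l, 0 => rw [c_l0]
    | 1, (k+1) =>
      rw [c_1]
      have hk : (0:ℝ) ≤ (k:ℝ) := Nat.cast_nonneg k
      positivity
    | (l+2), (k+1) =>
      rw [c_rec]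
      have h1 : 0 ≤ c (l+2) k := ih _ _ (by omega)
      have h2 : 0 ≤ c (l+1) (k+1) := ih _ _ (by omega)
      have hl : (0:ℝ) ≤ (l:ℝ) := Nat.cast_nonneg l
      have hk : (0:ℝ) ≤ (k:ℝ) := Nat.cast_nonneg k
      have d1 : (0:ℝ) ≤ 2*(l:ℝ)+(k:ℝ)+7 := by linarith
      apply add_nonneg
      · apply div_nonneg (mul_nonneg h1 (by linarith)) d1
      · apply div_nonneg (mul_nonneg h2 (by linarith)) d1

lemma c_nonneg (l k : ℕ) : 0 ≤ c l k := c_nonneg_aux (l+k) l k le_rfl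

private lemma c_le_aux : ∀ N l k, l + k ≤ N → c l k ≤ 2 * 3^k * (3/4:ℝ)^l := by
  intro N
  induction N with
  | zero => intro l k h
            have : l = 0 := by omega
            subst this; rw [c_0k]; positivity
  | succ N ih =>
    intro l k h
    match l, k with
    | 0, k => rw [c_0k]; positivity
    | l, 0 => rw [c_l0]; positivity
    | 1, (k+1) =>
      rw [c_1]
      have hk : (0:ℝ) ≤ (k:ℝ) := Nat.cast_nonneg k
      have h1 : (2 * ((k : ℝ) + 1) ^ 2 + 14 * ((k : ℝ) + 1)) /
        (((k : ℝ) + 2) * ((k : ℝ) + 3) * ((k : ℝ) + 4) * ((k : ℝ) + 5)) ≤ 1 := by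
        rw [div_le_one (by positivity)]
        nlinarith [sq_nonneg ((k:ℝ)), sq_nonneg ((k:ℝ)+1)]
      have h2 : (1:ℝ) ≤ 2 * 3^(k+1) * (3/4)^1 := by
        have h3 : (1:ℝ) ≤ 3^(k+1) := one_le_pow₀ (by norm_num)
        nlinarith
      linarith
    | (l+2), (k+1) =>
      rw [c_rec]
      have h1 := ih (l+2) k (by omega)
      have h2 := ih (l+1) (k+1) (by omega)
      have hl : (0:ℝ) ≤ (l:ℝ) := Nat.cast_nonneg l
      have hk : (0:ℝ) ≤ (k:ℝ) := Nat.cast_nonneg k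
      have d1 : (0:ℝ) < 2*(l:ℝ)+(k:ℝ)+7 := by linarith
      have w1 : ((l : ℝ) + (k : ℝ) + 2) / (2 * (l : ℝ) + (k : ℝ) + 7) ≤ 1 := by
        rw [div_le_one d1]; linarith
      have w2 : ((l : ℝ) + 1) / (2 * (l : ℝ) + (k : ℝ) + 7) ≤ 1/2 := by
        rw [div_le_div_iff₀ d1 (by norm_num)]; linarith
      have c1n := c_nonneg (l+2) k
      have c2n := c_nonneg (l+1) (k+1)
      have w1n : (0:ℝ) ≤ ((l : ℝ) + (k : ℝ) + 2) / (2 * (l : ℝ) + (k : ℝ) + 7) := by positivity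
      have w2n : (0:ℝ) ≤ ((l : ℝ) + 1) / (2 * (l : ℝ) + (k : ℝ) + 7) := by positivity
      have t1 : c (l + 2) k * (((l : ℝ) + (k : ℝ) + 2) / (2 * (l : ℝ) + (k : ℝ) + 7))
          ≤ (2 * 3^k * (3/4:ℝ)^(l+2)) * 1 :=
        mul_le_mul h1 w1 w1n (by positivity)
      have t2 : c (l + 1) (k+1) * (((l : ℝ) + 1) / (2 * (l : ℝ) + (k : ℝ) + 7))
          ≤ (2 * 3^(k+1) * (3/4:ℝ)^(l+1)) * (1/2) :=
        mul_le_mul h2 w2 w2n (by positivity)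
      have e : (2 * 3^k * (3/4:ℝ)^(l+2)) * 1 + (2 * 3^(k+1) * (3/4:ℝ)^(l+1)) * (1/2)
          = 2 * 3^(k+1) * (3/4:ℝ)^(l+2) := by ring
      rw [mul_div_assoc, mul_div_assoc]
      rw [← e]; exact add_le_add t1 t2

lemma c_le_geom (l k : ℕ) : c l k ≤ 2 * 3^k * (3/4:ℝ)^l := c_le_aux (l+k) l k le_rfl

lemma summable_w (m k : ℕ) : Summable (fun n : ℕ => ((n:ℝ)+1)^m * c (n+1) k) := by
  have hmaj : Summable (fun n : ℕ => ((n:ℝ)+1)^m * (2 * 3^k * (3/4:ℝ)^(n+1))) := by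
    have base : Summable (fun n : ℕ => (n:ℝ)^m * (3/4:ℝ)^n) := by
      apply summable_pow_mul_geometric_of_norm_lt_one
      rw [Real.norm_eq_abs, abs_lt]; constructor <;> norm_num
    have shifted : Summable (fun n : ℕ => ((n+1:ℕ):ℝ)^m * (3/4:ℝ)^(n+1)) :=
      (summable_nat_add_iff 1).2 base
    have : Summable (fun n : ℕ => (2*3^k : ℝ) * (((n+1:ℕ):ℝ)^m * (3/4:ℝ)^(n+1))) :=
      shifted.mul_left _
    apply this.congr
    intro n
    push_cast
    ring
  apply Summable.of_nonneg_of_le _ _ hmaj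
  · intro n; exact mul_nonneg (by positivity) (c_nonneg _ _)
  · intro n
    exact mul_le_mul_of_nonneg_left (c_le_geom (n+1) k) (by positivity)

lemma summable_w2 (m k : ℕ) : Summable (fun n : ℕ => ((n:ℝ)+2)^m * c (n+2) k) := by
  have := (summable_nat_add_iff 1).2 (summable_w m k)
  apply this.congr
  intro n
  push_cast
  ring_nf

noncomputable def P (m k : ℕ) : ℝ := ∑' n : ℕ, ((n:ℝ)+1)^m * c (n+1) k

lemma P_nonneg (m k : ℕ) : 0 ≤ P m k :=
  tsum_nonneg (fun n => mul_nonneg (by positivity) (c_nonneg _ _))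

lemma P_mono (m k : ℕ) : P m k ≤ P (m+1) k := by
  apply Summable.tsum_le_tsum _ (summable_w m k) (summable_w (m+1) k)
  intro n
  apply mul_le_mul_of_nonneg_right _ (c_nonneg _ _)
  have h1 : (1:ℝ) ≤ (n:ℝ)+1 := by linarith [Nat.cast_nonneg (α := ℝ) n]
  have h2 : (0:ℝ) ≤ ((n:ℝ)+1)^m := by positivity
  calc ((n:ℝ)+1)^m = ((n:ℝ)+1)^m * 1 := by ring
    _ ≤ ((n:ℝ)+1)^m * ((n:ℝ)+1) := by nlinarith
    _ = ((n:ℝ)+1)^(m+1) := by rw [pow_succ]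

lemma P_zero (m : ℕ) : P m 0 = 0 := by
  have h : (fun n : ℕ => ((n:ℝ)+1)^m * c (n+1) 0) = fun _ => (0:ℝ) :=
    funext fun n => by rw [c_l0, mul_zero]
  unfold P
  rw [h, tsum_zero]

lemma P_shift (m k : ℕ) : ∑' n : ℕ, ((n:ℝ)+2)^m * c (n+2) k = P m k - c 1 k := by
  have h := Summable.tsum_eq_zero_add (summable_w m k)
  unfold P
  rw [h]
  have : (fun n : ℕ => (((n+1:ℕ):ℝ)+1)^m * c ((n+1)+1) k) = fun n : ℕ => ((n:ℝ)+2)^m * c (n+2) k := by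
    funext n; push_cast; ring_nf
  simp only [Nat.cast_zero] at *
  rw [show ((0:ℝ)+1)^m * c (0+1) k = c 1 k by norm_num]
  rw [this]
  ring

lemma rec_mul (n k : ℕ) : (2*(n:ℝ)+(k:ℝ)+7) * c (n+2) (k+1)
    = ((n:ℝ)+(k:ℝ)+2) * c (n+2) k + ((n:ℝ)+1) * c (n+1) (k+1) := by
  rw [c_rec]
  have d : (2*(n:ℝ)+(k:ℝ)+7) ≠ 0 := by positivity
  field_simp

lemma I0 (k : ℕ) :
    2*(P 1 (k+1) - c 1 (k+1)) + ((k:ℝ)+3)*(P 0 (k+1) - c 1 (k+1))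
      = ((P 1 k - c 1 k) + (k:ℝ)*(P 0 k - c 1 k)) + P 1 (k+1) := by
  have e1 : ∑' n:ℕ, (2*(((n:ℝ)+2)^1 * c (n+2) (k+1)) + ((k:ℝ)+3)*(((n:ℝ)+2)^0 * c (n+2) (k+1)))
      = 2*(P 1 (k+1) - c 1 (k+1)) + ((k:ℝ)+3)*(P 0 (k+1) - c 1 (k+1)) := by
    rw [Summable.tsum_add ((summable_w2 1 (k+1)).mul_left 2) ((summable_w2 0 (k+1)).mul_left _),
      tsum_mul_left, tsum_mul_left, P_shift, P_shift]
  have e2 : ∑' n:ℕ, ((((n:ℝ)+2)^1 * c (n+2) k + (k:ℝ)*(((n:ℝ)+2)^0 * c (n+2) k))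
        + ((n:ℝ)+1)^1 * c (n+1) (k+1))
      = ((P 1 k - c 1 k) + (k:ℝ)*(P 0 k - c 1 k)) + P 1 (k+1) := by
    rw [Summable.tsum_add ((summable_w2 1 k).add ((summable_w2 0 k).mul_left _)) (summable_w 1 (k+1)),
      Summable.tsum_add (summable_w2 1 k) ((summable_w2 0 k).mul_left _), tsum_mul_left,
      P_shift, P_shift]
    rfl
  rw [← e1, ← e2]
  apply tsum_congr
  intro n
  have h := rec_mul n k
  simp only [pow_zero, pow_one]
  linarith

lemma I1 (k : ℕ) :
    2*(P 2 (k+1) - c 1 (k+1)) + ((k:ℝ)+3)*(P 1 (k+1) - c 1 (k+1))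
      = ((P 2 k - c 1 k) + (k:ℝ)*(P 1 k - c 1 k)) + (P 2 (k+1) + P 1 (k+1)) := by
  have e1 : ∑' n:ℕ, (2*(((n:ℝ)+2)^2 * c (n+2) (k+1)) + ((k:ℝ)+3)*(((n:ℝ)+2)^1 * c (n+2) (k+1)))
      = 2*(P 2 (k+1) - c 1 (k+1)) + ((k:ℝ)+3)*(P 1 (k+1) - c 1 (k+1)) := by
    rw [Summable.tsum_add ((summable_w2 2 (k+1)).mul_left 2) ((summable_w2 1 (k+1)).mul_left _),
      tsum_mul_left, tsum_mul_left, P_shift, P_shift]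
  have e2 : ∑' n:ℕ, ((((n:ℝ)+2)^2 * c (n+2) k + (k:ℝ)*(((n:ℝ)+2)^1 * c (n+2) k))
        + (((n:ℝ)+1)^2 * c (n+1) (k+1) + ((n:ℝ)+1)^1 * c (n+1) (k+1)))
      = ((P 2 k - c 1 k) + (k:ℝ)*(P 1 k - c 1 k)) + (P 2 (k+1) + P 1 (k+1)) := by
    rw [Summable.tsum_add ((summable_w2 2 k).add ((summable_w2 1 k).mul_left _))
        ((summable_w 2 (k+1)).add (summable_w 1 (k+1))),
      Summable.tsum_add (summable_w2 2 k) ((summable_w2 1 k).mul_left _), tsum_mul_left,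
      Summable.tsum_add (summable_w 2 (k+1)) (summable_w 1 (k+1)),
      P_shift, P_shift]
    rfl
  rw [← e1, ← e2]
  apply tsum_congr
  intro n
  have h := rec_mul n k
  simp only [pow_one]
  nlinarith [h, sq_nonneg ((n:ℝ)+2)]

lemma I2 (k : ℕ) :
    2*(P 3 (k+1) - c 1 (k+1)) + ((k:ℝ)+3)*(P 2 (k+1) - c 1 (k+1))
      = ((P 3 k - c 1 k) + (k:ℝ)*(P 2 k - c 1 k))
        + (P 3 (k+1) + 2 * P 2 (k+1) + P 1 (k+1)) := by
  have e1 : ∑' n:ℕ, (2*(((n:ℝ)+2)^3 * c (n+2) (k+1)) + ((k:ℝ)+3)*(((n:ℝ)+2)^2 * c (n+2) (k+1)))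
      = 2*(P 3 (k+1) - c 1 (k+1)) + ((k:ℝ)+3)*(P 2 (k+1) - c 1 (k+1)) := by
    rw [Summable.tsum_add ((summable_w2 3 (k+1)).mul_left 2) ((summable_w2 2 (k+1)).mul_left _),
      tsum_mul_left, tsum_mul_left, P_shift, P_shift]
  have e2 : ∑' n:ℕ, ((((n:ℝ)+2)^3 * c (n+2) k + (k:ℝ)*(((n:ℝ)+2)^2 * c (n+2) k))
        + (((n:ℝ)+1)^3 * c (n+1) (k+1) + (2*(((n:ℝ)+1)^2 * c (n+1) (k+1))
            + ((n:ℝ)+1)^1 * c (n+1) (k+1))))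
      = ((P 3 k - c 1 k) + (k:ℝ)*(P 2 k - c 1 k))
        + (P 3 (k+1) + (2 * P 2 (k+1) + P 1 (k+1))) := by
    rw [Summable.tsum_add ((summable_w2 3 k).add ((summable_w2 2 k).mul_left _))
        ((summable_w 3 (k+1)).add (((summable_w 2 (k+1)).mul_left 2).add (summable_w 1 (k+1)))),
      Summable.tsum_add (summable_w2 3 k) ((summable_w2 2 k).mul_left _), tsum_mul_left,
      Summable.tsum_add (summable_w 3 (k+1)) (((summable_w 2 (k+1)).mul_left 2).add (summable_w 1 (k+1))),
      Summable.tsum_add ((summable_w 2 (k+1)).mul_left 2) (summable_w 1 (k+1)), tsum_mul_left,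
      P_shift, P_shift]
    rfl
  rw [← e1]
  rw [show ((P 3 k - c 1 k) + (k:ℝ)*(P 2 k - c 1 k)) + (P 3 (k+1) + 2 * P 2 (k+1) + P 1 (k+1))
      = ((P 3 k - c 1 k) + (k:ℝ)*(P 2 k - c 1 k)) + (P 3 (k+1) + (2 * P 2 (k+1) + P 1 (k+1))) by ring,
    ← e2]
  apply tsum_congr
  intro n
  have h := rec_mul n k
  simp only [pow_one]
  nlinarith [h, sq_nonneg ((n:ℝ)+2)]

lemma gstep (k : ℕ) : ((k:ℝ)+5)*c 1 (k+1) - ((k:ℝ)+1)*c 1 k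
    = 2*((k:ℝ)+1)/((k:ℝ)+3) - 2*(k:ℝ)/((k:ℝ)+2) := by
  cases k with
  | zero =>
    rw [c_l0, c_1]
    norm_num
  | succ j =>
    rw [c_1, show j+1 = j+0+1 from rfl, c_1]
    have hj : (0:ℝ) ≤ (j:ℝ) := Nat.cast_nonneg j
    push_cast
    have h1 : ((j:ℝ)+2) ≠ 0 := by positivity
    have h2 : ((j:ℝ)+3) ≠ 0 := by positivity
    have h3 : ((j:ℝ)+4) ≠ 0 := by positivity
    have h4 : ((j:ℝ)+5) ≠ 0 := by positivity
    have h5 : ((j:ℝ)+6) ≠ 0 := by positivity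
    field_simp
    ring

noncomputable def Sa (k : ℕ) : ℝ := ∑ j ∈ Finset.range k, P 0 (j+1)
noncomputable def Sb (k : ℕ) : ℝ := ∑ j ∈ Finset.range k, P 1 (j+1)

lemma Sig0 (k : ℕ) : P 1 k + (k:ℝ)*P 0 k + 2*Sa k = 2*(k:ℝ)/((k:ℝ)+2) := by
  induction k with
  | zero => simp [P_zero, Sa]
  | succ k ih =>
    have hs : Sa (k+1) = Sa k + P 0 (k+1) := Finset.sum_range_succ _ _
    have j0 : P 1 (k+1) + ((k:ℝ)+3)*P 0 (k+1)
        = P 1 k + (k:ℝ)*P 0 k + (((k:ℝ)+5)*c 1 (k+1) - ((k:ℝ)+1)*c 1 k) := by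
      have := I0 k; linarith
    have hg := gstep k
    push_cast
    rw [hs]
    have : P 1 (k+1) + ((k:ℝ)+1)*P 0 (k+1) + 2*(Sa k + P 0 (k+1))
        = (P 1 (k+1) + ((k:ℝ)+3)*P 0 (k+1)) + 2*Sa k := by ring
    rw [this, j0, hg, show ((k:ℝ)+1+2) = (k:ℝ)+3 by ring]
    linarith [ih]

lemma Sig1 (k : ℕ) : P 2 k + (k:ℝ)*P 1 k + Sb k = 2*(k:ℝ)/((k:ℝ)+2) := by
  induction k with
  | zero => simp [P_zero, Sb]
  | succ k ih =>
    have hs : Sb (k+1) = Sb k + P 1 (k+1) := Finset.sum_range_succ _ _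
    have j1 : P 2 (k+1) + ((k:ℝ)+2)*P 1 (k+1)
        = P 2 k + (k:ℝ)*P 1 k + (((k:ℝ)+5)*c 1 (k+1) - ((k:ℝ)+1)*c 1 k) := by
      have := I1 k; linarith
    have hg := gstep k
    push_cast
    rw [hs]
    have : P 2 (k+1) + ((k:ℝ)+1)*P 1 (k+1) + (Sb k + P 1 (k+1))
        = (P 2 (k+1) + ((k:ℝ)+2)*P 1 (k+1)) + Sb k := by ring
    rw [this, j1, hg, show ((k:ℝ)+1+2) = (k:ℝ)+3 by ring]
    linarith [ih]

lemma Sig2 (k : ℕ) : P 3 k + (k:ℝ)*P 2 k - Sb k = 2*(k:ℝ)/((k:ℝ)+2) := by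
  induction k with
  | zero => simp [P_zero, Sb]
  | succ k ih =>
    have hs : Sb (k+1) = Sb k + P 1 (k+1) := Finset.sum_range_succ _ _
    have j2 : P 3 (k+1) + ((k:ℝ)+1)*P 2 (k+1) - P 1 (k+1)
        = P 3 k + (k:ℝ)*P 2 k + (((k:ℝ)+5)*c 1 (k+1) - ((k:ℝ)+1)*c 1 k) := by
      have := I2 k; linarith
    have hg := gstep k
    push_cast
    rw [hs]
    have : P 3 (k+1) + ((k:ℝ)+1)*P 2 (k+1) - (Sb k + P 1 (k+1))
        = (P 3 (k+1) + ((k:ℝ)+1)*P 2 (k+1) - P 1 (k+1)) - Sb k := by ring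
    rw [this, j2, hg, show ((k:ℝ)+1+2) = (k:ℝ)+3 by ring]
    linarith [ih]

noncomputable def HB (k : ℕ) : ℝ := ∑ j ∈ Finset.range k, 1/((j:ℝ)+1)

lemma HB_nonneg (k : ℕ) : 0 ≤ HB k :=
  Finset.sum_nonneg (fun j _ => by positivity)

lemma logstep (k : ℕ) (hk : 1 ≤ k) : 1/((k:ℝ)+1) ≤ Real.log ((k:ℝ)+1) - Real.log k := by
  have hk0 : (0:ℝ) < (k:ℝ) := by exact_mod_cast hk
  have h1 : (0:ℝ) < (k:ℝ)/((k:ℝ)+1) := by positivity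
  have h2 := Real.log_le_sub_one_of_pos h1
  rw [Real.log_div (by positivity) (by positivity)] at h2
  have h3 : (k:ℝ)/((k:ℝ)+1) - 1 = -(1/((k:ℝ)+1)) := by field_simp; ring
  rw [h3] at h2
  linarith

lemma HB_le : ∀ k : ℕ, 1 ≤ k → HB k ≤ 1 + Real.log k := by
  intro k hk
  induction k with
  | zero => omega
  | succ k ih =>
    cases Nat.eq_or_lt_of_le hk with
    | inl h =>
      have : k = 0 := by omega
      subst this
      simp [HB]
    | inr h =>
      have hk1 : 1 ≤ k := by omega
      have hs : HB (k+1) = HB k + 1/((k:ℝ)+1) := Finset.sum_range_succ _ _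
      have := logstep k hk1
      have := ih hk1
      push_cast
      rw [hs]
      linarith

lemma Sb_le (k : ℕ) : Sb k ≤ 2 := by
  have h := Sig1 k
  have h1 : (0:ℝ) ≤ (k:ℝ) * P 1 k := mul_nonneg (Nat.cast_nonneg k) (P_nonneg 1 k)
  have h2 := P_nonneg 2 k
  have h3 : 2*(k:ℝ)/((k:ℝ)+2) ≤ 2 := by
    rw [div_le_iff₀ (by positivity)]
    linarith [Nat.cast_nonneg (α := ℝ) k]
  linarith

lemma Sb_nonneg (k : ℕ) : 0 ≤ Sb k :=
  Finset.sum_nonneg (fun j _ => P_nonneg 1 (j+1))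

lemma P2_le (k : ℕ) : (k:ℝ) * P 2 k ≤ 4 := by
  have h := Sig2 k
  have h1 := P_nonneg 3 k
  have h2 := Sb_le k
  have h3 : 2*(k:ℝ)/((k:ℝ)+2) ≤ 2 := by
    rw [div_le_iff₀ (by positivity)]
    linarith [Nat.cast_nonneg (α := ℝ) k]
  linarith

noncomputable def Sd (k : ℕ) : ℝ := ∑ j ∈ Finset.range k, P 2 (j+1)
noncomputable def S4 (k : ℕ) : ℝ := ∑ j ∈ Finset.range k, 4/((j:ℝ)+3)

lemma Sd_le (k : ℕ) : Sd k ≤ 4 * HB k := by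
  unfold Sd HB
  rw [Finset.mul_sum]
  apply Finset.sum_le_sum
  intro j _
  have h := P2_le (j+1)
  push_cast at h
  have hj : (0:ℝ) < (j:ℝ)+1 := by positivity
  rw [show (4:ℝ)*(1/((j:ℝ)+1)) = 4/((j:ℝ)+1) by ring, le_div_iff₀ hj]
  linarith

lemma S4_le (k : ℕ) : S4 k ≤ 4 * HB k := by
  unfold S4 HB
  rw [Finset.mul_sum]
  apply Finset.sum_le_sum
  intro j _
  rw [show (4:ℝ)*(1/((j:ℝ)+1)) = 4/((j:ℝ)+1) by ring]
  apply div_le_div_of_nonneg_left (by norm_num) (by positivity) (by linarith)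

lemma S4_nonneg (k : ℕ) : 0 ≤ S4 k :=
  Finset.sum_nonneg (fun j _ => by positivity)

lemma beta_eq (k : ℕ) : 2 - Sb k = 4/((k:ℝ)+2) + P 2 k + (k:ℝ) * P 1 k := by
  have h := Sig1 k
  have h2 : 2 - 2*(k:ℝ)/((k:ℝ)+2) = 4/((k:ℝ)+2) := by
    field_simp
    ring
  linarith

lemma kbeta : ∀ k : ℕ, (k:ℝ) * (2 - Sb k) = Sb k + Sd k + S4 k := by
  intro k
  induction k with
  | zero => simp [Sb, Sd, S4]
  | succ k ih =>
    have hb : Sb (k+1) = Sb k + P 1 (k+1) := Finset.sum_range_succ _ _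
    have hd : Sd (k+1) = Sd k + P 2 (k+1) := Finset.sum_range_succ _ _
    have h4 : S4 (k+1) = S4 k + 4/((k:ℝ)+3) := by
      rw [S4, Finset.sum_range_succ]; rfl
    have hbe := beta_eq (k+1)
    push_cast at hbe ⊢
    rw [hb, hd, h4]
    have : ((k:ℝ)+1+2) = (k:ℝ)+3 := by ring
    rw [this] at hbe
    linarith [ih]

lemma beta_le (k : ℕ) (hk : 1 ≤ k) : 2 - Sb k ≤ (10 + 8*Real.log k)/k := by
  have h := kbeta k
  have h1 := Sd_le k
  have h2 := S4_le k
  have h3 := Sb_le k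
  have h4 := HB_le k hk
  have hk0 : (0:ℝ) < (k:ℝ) := by exact_mod_cast hk
  rw [le_div_iff₀ hk0]
  nlinarith [HB_nonneg k]

lemma P1_le (k : ℕ) (hk : 1 ≤ k) : P 1 k ≤ (10 + 8*Real.log k)/k^2 := by
  have h := beta_eq k
  have h1 := beta_le k hk
  have h2 := P_nonneg 2 k
  have hk0 : (0:ℝ) < (k:ℝ) := by exact_mod_cast hk
  have h3 : (0:ℝ) ≤ 4/((k:ℝ)+2) := by positivity
  have h4 : (k:ℝ) * P 1 k ≤ (10 + 8*Real.log k)/k := by linarith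
  rw [le_div_iff₀ (by positivity)]
  rw [le_div_iff₀ hk0] at h4
  nlinarith [P_nonneg 1 k]

noncomputable def al (k : ℕ) : ℝ := 1 - Sa k
noncomputable def uu (k : ℕ) : ℝ := ((k:ℝ)+1)*((k:ℝ)+2)*(al k)

lemma al_eq (k : ℕ) : al k = 2/((k:ℝ)+2) + ((k:ℝ)*P 0 k + P 1 k)/2 := by
  have h := Sig0 k
  have h2 : 1 - (k:ℝ)/((k:ℝ)+2) = 2/((k:ℝ)+2) := by
    field_simp
    ring
  have h3 : 2*(k:ℝ)/((k:ℝ)+2) = 2*((k:ℝ)/((k:ℝ)+2)) := by ring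
  unfold al
  rw [h3] at h
  linarith

lemma al_diff (k : ℕ) : al k - al (k+1) = P 0 (k+1) := by
  unfold al Sa
  rw [Finset.sum_range_succ]
  ring

lemma uu_rec (k : ℕ) : uu (k+1) - uu k = ((k:ℝ)+2)*(4/((k:ℝ)+3) + P 1 (k+1)) := by
  have e1 := al_eq (k+1)
  have e2 : al k = al (k+1) + P 0 (k+1) := by linarith [al_diff k]
  unfold uu
  push_cast at e1 ⊢
  rw [e2]
  have h3 : ((k:ℝ)+1+2) = (k:ℝ)+3 := by ring
  rw [h3] at e1
  linear_combination (2*((k:ℝ)+2)) * e1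

noncomputable def Q (k : ℕ) : ℝ := ∑ j ∈ Finset.range k, ((j:ℝ)+2)*P 1 (j+1)

lemma Q_nonneg (k : ℕ) : 0 ≤ Q k :=
  Finset.sum_nonneg (fun j _ => mul_nonneg (by positivity) (P_nonneg _ _))

lemma Q_mono {j k : ℕ} (h : j ≤ k) : Q j ≤ Q k := by
  unfold Q
  apply Finset.sum_le_sum_of_subset_of_nonneg (Finset.range_subset_range.2 h)
  intro i _ _
  exact mul_nonneg (by positivity) (P_nonneg _ _)

lemma uu_sum : ∀ k : ℕ, uu k = 2 + (4*(k:ℝ) - S4 k) + Q k := by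
  intro k
  induction k with
  | zero =>
    unfold uu al Sa S4 Q
    simp
  | succ k ih =>
    have hr := uu_rec k
    have h4 : S4 (k+1) = S4 k + 4/((k:ℝ)+3) := by
      rw [S4, Finset.sum_range_succ]; rfl
    have hq : Q (k+1) = Q k + ((k:ℝ)+2)*P 1 (k+1) := by
      rw [Q, Finset.sum_range_succ]; rfl
    have hsplit : ((k:ℝ)+2)*(4/((k:ℝ)+3) + P 1 (k+1))
        = (4 - 4/((k:ℝ)+3)) + ((k:ℝ)+2)*P 1 (k+1) := by
      have : ((k:ℝ)+2)*(4/((k:ℝ)+3)) = 4 - 4/((k:ℝ)+3) := by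
        field_simp
        ring
      linear_combination this
    push_cast
    rw [h4, hq]
    rw [hsplit] at hr
    linarith [ih]

lemma Q_le (k : ℕ) (hk : 1 ≤ k) : Q k ≤ 20*(1+Real.log k)^2 := by
  have hk0 : (1:ℝ) ≤ (k:ℝ) := by exact_mod_cast hk
  have hL : 0 ≤ Real.log k := Real.log_nonneg hk0
  have step : ∀ j ∈ Finset.range k, ((j:ℝ)+2)*P 1 (j+1)
      ≤ (2*(10+8*Real.log k)) * (1/((j:ℝ)+1)) := by
    intro j hj
    have hjk : (j:ℕ)+1 ≤ k := Finset.mem_range.1 hj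
    have hjk' : ((j:ℝ)+1) ≤ (k:ℝ) := by exact_mod_cast hjk
    have hj0 : (0:ℝ) < (j:ℝ)+1 := by positivity
    have hp := P1_le (j+1) (by omega)
    push_cast at hp
    have hlog : Real.log ((j:ℝ)+1) ≤ Real.log k := Real.log_le_log hj0 hjk'
    have hp2 : P 1 (j+1) ≤ (10 + 8*Real.log k)/((j:ℝ)+1)^2 := by
      apply le_trans hp
      apply div_le_div_of_nonneg_right _ (by positivity)
      linarith
    have h2 : ((j:ℝ)+2) ≤ 2*((j:ℝ)+1) := by linarith [Nat.cast_nonneg (α := ℝ) j]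
    calc ((j:ℝ)+2)*P 1 (j+1) ≤ (2*((j:ℝ)+1)) * ((10 + 8*Real.log k)/((j:ℝ)+1)^2) := by
          apply mul_le_mul h2 hp2 (P_nonneg _ _) (by positivity)
      _ = (2*(10+8*Real.log k)) * (1/((j:ℝ)+1)) := by
          field_simp
  have hQ : Q k ≤ (2*(10+8*Real.log k)) * HB k := by
    unfold Q HB
    rw [Finset.mul_sum]
    exact Finset.sum_le_sum step
  have hHB := HB_le k hk
  have hHBn := HB_nonneg k
  nlinarith [hQ, hHB]

lemma P0_mul (m : ℕ) : ((m:ℝ)+1)*((m:ℝ)+2)*((m:ℝ)+3)*P 0 (m+1)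
    = ((m:ℝ)+3)*uu m - ((m:ℝ)+1)*uu (m+1) := by
  have h := al_diff m
  unfold uu
  push_cast
  linear_combination (-(((m:ℝ)+1)*((m:ℝ)+2)*((m:ℝ)+3))) * h

lemma N_id (m : ℕ) : (((m:ℝ)+3)*uu m - ((m:ℝ)+1)*uu (m+1) - 4*(m:ℝ)
      - 2*Q m + ((m:ℝ)+1)*((m:ℝ)+2)*P 1 (m+1) + 2*S4 m) * ((m:ℝ)+3)
    = 4*((m:ℝ)+1) := by
  have h1 := uu_sum m
  have h2 := uu_sum (m+1)
  have hq : Q (m+1) = Q m + ((m:ℝ)+2)*P 1 (m+1) := by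
    rw [Q, Finset.sum_range_succ]; rfl
  have h4 : S4 (m+1) = S4 m + 4/((m:ℝ)+3) := by
    rw [S4, Finset.sum_range_succ]; rfl
  push_cast at h2
  rw [hq, h4] at h2
  have hd : ((m:ℝ)+3) ≠ 0 := by positivity
  have h2' : uu (m+1) * ((m:ℝ)+3)
      = (2 + (4*((m:ℝ)+1) - (S4 m + 4/((m:ℝ)+3))) + (Q m + ((m:ℝ)+2)*P 1 (m+1))) * ((m:ℝ)+3) := by
    rw [h2]
  have h2'' : uu (m+1) * ((m:ℝ)+3)
      = (2 + 4*((m:ℝ)+1) - S4 m + Q m + ((m:ℝ)+2)*P 1 (m+1)) * ((m:ℝ)+3) - 4 := by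
    rw [h2']
    field_simp
    ring
  linear_combination (((m:ℝ)+3)^2) * h1 - (((m:ℝ)+1)) * h2''

set_option maxHeartbeats 1000000 in
lemma main_bound (m : ℕ) (hm : 1 ≤ m) :
    |P 0 (m+1) - 4/((m:ℝ)+1)^2| ≤ 600*(Real.log ((m:ℝ)+1))^2/((m:ℝ)+1)^3 := by
  set x := (m:ℝ) with hxdef
  have hx : (1:ℝ) ≤ x := by rw [hxdef]; exact_mod_cast hm
  set L := Real.log (x+1) with hLdef
  have hL2 : Real.log 2 ≤ L := Real.log_le_log (by norm_num) (by linarith)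
  have hlog2 : (0.6931471803:ℝ) < Real.log 2 := Real.log_two_gt_d9
  have hL0 : (0:ℝ) ≤ L := by linarith
  have hxpos : (0:ℝ) < x := by linarith
  have hlogm : Real.log x ≤ L := Real.log_le_log hxpos (by linarith)
  have hlogm0 : 0 ≤ Real.log x := Real.log_nonneg hx
  -- component bounds
  have hQm : Q m ≤ 20*(1+L)^2 := by
    have h := Q_le m hm
    nlinarith [h, hlogm, hlogm0]
  have hQn : 0 ≤ Q m := Q_nonneg m
  have hS4 : S4 m ≤ 4*(1+L) := by
    have h1 := S4_le m
    have h2 := HB_le m hm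
    nlinarith [h1, h2]
  have hS4n : 0 ≤ S4 m := S4_nonneg m
  have hP1n : 0 ≤ (x+1)*(x+2)*P 1 (m+1) := by
    have := P_nonneg 1 (m+1); positivity
  have hP1b : (x+1)*(x+2)*P 1 (m+1) ≤ 15*(1+L) := by
    have hp := P1_le (m+1) (by omega)
    push_cast at hp
    have h1 : (x+1)*(x+2)*P 1 (m+1) ≤ (x+1)*(x+2)*((10+8*L)/(x+1)^2) := by
      apply mul_le_mul_of_nonneg_left hp (by positivity)
    have h2 : (x+1)*(x+2)*((10+8*L)/(x+1)^2) = (x+2)*(10+8*L)/(x+1) := by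
      field_simp
    have h3 : (x+2)*(10+8*L)/(x+1) ≤ 15*(1+L) := by
      rw [div_le_iff₀ (by positivity)]
      nlinarith
    linarith [h1, h2.le, h2.ge]
  have hd : (x+3) ≠ 0 := by positivity
  have hd4a : (0:ℝ) ≤ 4*(x+1)/(x+3) := by positivity
  have hd4b : 4*(x+1)/(x+3) ≤ 4 := by
    rw [div_le_iff₀ (by positivity)]
    linarith
  set NN := (x+3)*uu m - (x+1)*uu (m+1) with hNN
  have hA : NN - 4*x - 2*Q m + (x+1)*(x+2)*P 1 (m+1) + 2*S4 m = 4*(x+1)/(x+3) := by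
    rw [eq_div_iff hd]
    exact N_id m
  have hone : (1:ℝ) ≤ 1 + L := by linarith
  have habs : |NN - 4*x| ≤ 67*(1+L)^2 := by
    rw [abs_le]
    constructor
    · nlinarith [hA, hQn, hP1b, hS4, hd4a]
    · nlinarith [hA, hQm, hP1n, hS4n, hd4b]
  have hcpos : (0:ℝ) < (x+1)*(x+2)*(x+3) := by positivity
  have hP0eq : P 0 (m+1) = NN/((x+1)*(x+2)*(x+3)) := by
    rw [eq_div_iff (ne_of_gt hcpos)]
    have := P0_mul m
    linarith [this]
  have hdiff1 : P 0 (m+1) - 4*x/((x+1)*(x+2)*(x+3)) = (NN - 4*x)/((x+1)*(x+2)*(x+3)) := by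
    rw [hP0eq, ← sub_div]
  have hcc : (x+1)^3 ≤ (x+1)*(x+2)*(x+3) := by nlinarith
  have hb1 : |P 0 (m+1) - 4*x/((x+1)*(x+2)*(x+3))| ≤ 67*(1+L)^2/(x+1)^3 := by
    rw [hdiff1, abs_div, abs_of_pos hcpos]
    calc |NN - 4*x| / ((x+1)*(x+2)*(x+3)) ≤ |NN - 4*x| / (x+1)^3 := by
          gcongr
      _ ≤ 67*(1+L)^2/(x+1)^3 := by gcongr
  have hb2 : |4*x/((x+1)*(x+2)*(x+3)) - 4/(x+1)^2| ≤ 16/(x+1)^3 := by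
    have heq : 4*x/((x+1)*(x+2)*(x+3)) - 4/(x+1)^2
        = -((16*x+24)/((x+1)^2*((x+2)*(x+3)))) := by
      field_simp
      ring
    rw [heq, abs_neg, abs_of_pos (by positivity)]
    rw [div_le_div_iff₀ (by positivity) (by positivity)]
    nlinarith
  have htri := abs_sub_le (P 0 (m+1)) (4*x/((x+1)*(x+2)*(x+3))) (4/(x+1)^2)
  have hsum : |P 0 (m+1) - 4/(x+1)^2| ≤ (67*(1+L)^2 + 16)/(x+1)^3 := by
    rw [show (67*(1+L)^2 + 16)/(x+1)^3 = 67*(1+L)^2/(x+1)^3 + 16/(x+1)^3 by ring]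
    linarith [htri, hb1, hb2]
  have hnum : 67*(1+L)^2 + 16 ≤ 600*L^2 := by
    nlinarith [hL2, hlog2, sq_nonneg L]
  have hfin : (67*(1+L)^2 + 16)/(x+1)^3 ≤ 600*L^2/(x+1)^3 := by
    gcongr
  exact hsum.trans hfin

/-- The column sums satisfy `∑_{l=1}^∞ c(l,k) = 4/k² + O(ln²k/k³)`: there is `C > 0`
such that `|∑_{l=1}^∞ c(l,k) − 4/k²| ≤ C·ln²k/k³` for all `k ≥ 2`. -/
theorem column_sum_asymptotics :
    ∃ C : ℝ, 0 < C ∧ ∀ k : ℕ, 2 ≤ k →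
      |(∑' l : ℕ, c (l + 1) k) - 4 / (k : ℝ) ^ 2| ≤
        C * (Real.log k) ^ 2 / (k : ℝ) ^ 3 := by
  refine ⟨600, by norm_num, ?_⟩
  intro k hk
  obtain ⟨m, rfl⟩ : ∃ m, k = m + 1 := ⟨k - 1, by omega⟩
  have hm : 1 ≤ m := by omega
  have htsum : (∑' l : ℕ, c (l + 1) (m+1)) = P 0 (m+1) := by
    unfold P
    apply tsum_congr
    intro n
    rw [pow_zero, one_mul]
  rw [htsum]
  have hmb := main_bound m hm
  push_cast
  convert hmb using 2
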